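/- Let G be a finite group, p a prime, and T an abelian subgroup of G. Let Y be the (unique) Sylow p-subgroup of T, and assume Y is nontrivial and cyclic. Suppose that for every element y ∈ Y of order p, the centralizer C_G(y) is contained in T. Then Y is a Sylow p-subgroup of G. -/

import Mathlib

theorem stmt_7 {G : Type*} [Group G] [Finite G] (p : ℕ) [Fact p.Prime]
    (T : Subgroup G) (hT : IsMulCommutative T) (Y : Sylow p T)
    (hYne : (Y : Subgroup T) ≠ ⊥) (hYcyc : IsCyclic (Y : Subgroup T))
    (hcent : ∀ y : G, y ∈ (Y : Subgroup T).map T.subtype → orderOf y = p →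
      Subgroup.centralizer {y} ≤ T) :
    ∀ Q : Subgroup G, IsPGroup p Q → (Y : Subgroup T).map T.subtype ≤ Q →
      Q = (Y : Subgroup T).map T.subtype := by
  haveI := hT
  intro Q hQ hle
  set Y' : Subgroup G := (Y : Subgroup T).map T.subtype with hY'def
  by_contra hne
  -- Y' is cyclic
  haveI hY'cyc : IsCyclic ↥Y' :=
    isCyclic_of_surjective ((Y : Subgroup T).equivMapOfInjective T.subtype
      T.subtype_injective).toMonoidHom
      (MulEquiv.surjective _)
  -- Y' is a p-group
  have hY'p : IsPGroup p Y' := (Y.isPGroup').map T.subtype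
  -- Y' nontrivial
  have hY'ne : Y' ≠ ⊥ := by
    intro h
    rw [hY'def, Subgroup.map_eq_bot_iff_of_injective _ T.subtype_injective] at h
    exact hYne h
  haveI : Nontrivial ↥Y' := (Subgroup.nontrivial_iff_ne_bot Y').mpr hY'ne
  -- element of order p in Y'
  have hpdvd : p ∣ Nat.card ↥Y' := by
    obtain ⟨n, hn⟩ := IsPGroup.iff_card.mp hY'p
    rcases n with _ | n
    · have h1 : 1 < Nat.card ↥Y' := Finite.one_lt_card
      rw [pow_zero] at hn
      omega
    · exact hn ▸ dvd_pow_self p (Nat.succ_ne_zero n)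
  obtain ⟨z₀, hz₀⟩ := exists_prime_orderOf_dvd_card' (G := ↥Y') p hpdvd
  set z : G := (z₀ : G) with hzdef
  have hzY' : z ∈ Y' := z₀.2
  have hzord : orderOf z = p := by rw [hzdef, Subgroup.orderOf_coe]; exact hz₀
  -- generator of Y'
  obtain ⟨g, hg⟩ := hY'cyc.exists_generator
  obtain ⟨m, hm⟩ := hg z₀
  have hm' : g ^ m = z₀ := hm
  have hmG : (g : G) ^ m = z := by rw [hzdef, ← hm']; norm_cast
  -- normalizer condition inside Q
  haveI : Group.IsNilpotent ↥Q := hQ.isNilpotent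
  have hnc : NormalizerCondition ↥Q := normalizerCondition_of_isNilpotent
  have hHlt : Y'.subgroupOf Q < ⊤ := by
    rw [lt_top_iff_ne_top]
    intro htop
    exact hne (le_antisymm (Subgroup.subgroupOf_eq_top.mp htop) hle)
  obtain ⟨x, hxn, hxH⟩ := SetLike.exists_of_lt (hnc _ hHlt)
  set xv : G := (x : G) with hxvdef
  have hxH' : xv ∉ Y' := fun h => hxH (Subgroup.mem_subgroupOf.mpr h)
  -- conjugation by x preserves Y'
  have hconj : ∀ w : G, w ∈ Y' → xv * w * xv⁻¹ ∈ Y' := by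
    intro w hw
    have h1 : (⟨w, hle hw⟩ : ↥Q) ∈ Y'.subgroupOf Q := Subgroup.mem_subgroupOf.mpr hw
    have h2 := (Subgroup.mem_normalizer_iff.mp hxn ⟨w, hle hw⟩).mp h1
    exact Subgroup.mem_subgroupOf.mp h2
  -- x * g * x⁻¹ = g ^ k
  obtain ⟨k, hk⟩ := hg ⟨xv * (g : G) * xv⁻¹, hconj _ g.2⟩
  have hkG : xv * (g : G) * xv⁻¹ = (g : G) ^ k := by
    rw [← Subtype.coe_inj] at hk
    push_cast at hk
    exact hk.symm
  -- conjugation sends z to z ^ k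
  have hconjz : xv * z * xv⁻¹ = z ^ k := by
    rw [← hmG, ← conj_zpow, hkG, ← zpow_mul, mul_comm, zpow_mul]
  -- p-power order of x
  obtain ⟨n, hn⟩ := hQ x
  have hxvn : xv ^ p ^ n = 1 := by
    rw [hxvdef, ← Subgroup.coe_pow, hn, Subgroup.coe_one]
  -- iterate conjugation
  have hiter : ∀ j : ℕ, xv ^ j * z * (xv ^ j)⁻¹ = z ^ k ^ j := by
    intro j
    induction j with
    | zero => simp
    | succ i ih =>
      rw [pow_succ']
      rw [show xv * xv ^ i * z * (xv * xv ^ i)⁻¹ = xv * (xv ^ i * z * (xv ^ i)⁻¹) * xv⁻¹ by group]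
      rw [ih, ← conj_zpow, hconjz, ← zpow_mul, ← pow_succ']
  have hfix : z ^ k ^ p ^ n = z ^ (1 : ℤ) := by
    rw [← hiter (p ^ n), hxvn]; simp
  -- modular arithmetic: k ≡ 1 mod p
  have hmod : k ^ p ^ n ≡ 1 [ZMOD p] := by
    have := (zpow_eq_zpow_iff_modEq).mp hfix
    rwa [hzord] at this
  have hk1 : k ≡ 1 [ZMOD p] := by
    rw [← ZMod.intCast_eq_intCast_iff] at hmod ⊢
    push_cast at hmod
    rw [ZMod.pow_card_pow] at hmod
    push_cast
    exact hmod
  have hzk : z ^ k = z ^ (1 : ℤ) := by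
    rw [zpow_eq_zpow_iff_modEq, hzord]
    exact hk1
  have hcomm : xv * z * xv⁻¹ = z := by rw [hconjz, hzk, zpow_one]
  -- x centralizes z, hence x ∈ T
  have hxT : xv ∈ T := by
    apply hcent z hzY' hzord
    rw [Subgroup.mem_centralizer_iff]
    intro h hh
    rw [Set.mem_singleton_iff] at hh
    subst hh
    exact (mul_inv_eq_iff_eq_mul.mp hcomm).symm
  -- zpowers of x in T is a p-group, hence contained in Y
  set w : ↥T := ⟨xv, hxT⟩ with hwdef
  have hwn : w ^ p ^ n = 1 := by
    rw [← Subtype.coe_inj]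
    push_cast
    exact hxvn
  have hzp : IsPGroup p (Subgroup.zpowers w) := by
    intro u
    refine ⟨n, ?_⟩
    obtain ⟨i, hi⟩ := u.2
    rw [← Subtype.coe_inj]
    push_cast
    have : (u : ↥T) = w ^ i := hi.symm
    rw [this, ← zpow_natCast, ← zpow_mul, mul_comm, zpow_mul, zpow_natCast, hwn, one_zpow]
  obtain ⟨P, hP⟩ := hzp.exists_le_sylow
  have hYnormal : (Y : Subgroup T).Normal := by
    constructor
    intro a ha gT
    have : gT * a * gT⁻¹ = a := by rw [hT.is_comm.comm gT a]; group
    rwa [this]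
  haveI := Sylow.unique_of_normal Y hYnormal
  have hPY : P = Y := Subsingleton.elim P Y
  have hwY : w ∈ (Y : Subgroup T) := by
    rw [← hPY]
    exact hP (Subgroup.mem_zpowers w)
  exact hxH' ⟨w, hwY, rfl⟩
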